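/- arXiv:2603.18454 — 2 statements merged into one kernel-verified Lean document; each statement's English description precedes it below -/
import Mathlib

section
/- Let (Ω, 𝒜) be a measurable space, Q a probability measure on Ω, and P a probability measure on Ω with P ≪ Q. Let β > 0 and let ℓ : Ω → ℝ be measurable such that ω ↦ exp(-β·ℓ(ω)) is Q-integrable, ℓ is P-integrable, and D(P‖Q) < ∞. Set Z := ∫ exp(-β·ℓ) dQ (note Z > 0). Then equality -(1/β)·log Z - (1/β)·D(P‖Q) = ∫ ℓ dP holds if and only if the Radon–Nikodym derivative satisfies dP/dQ = exp(-β·ℓ)/Z, Q-almost everywhere. -/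
open MeasureTheory Real

/-- Equality case of the Gibbs inequality: if the relative entropy integral vanishes,
the Radon–Nikodym derivative is `1` almost everywhere. -/
lemma gibbs_aux {α : Type*} [MeasurableSpace α] (P G : Measure α)
    [IsProbabilityMeasure P] [IsProbabilityMeasure G] (hPG : P ≪ G)
    (hint : Integrable (llr P G) P) (h0 : ∫ x, llr P G x ∂P = 0) :
    ∀ᵐ x ∂G, P.rnDeriv G x = 1 := by
  set g : α → ℝ := fun x => (P.rnDeriv G x).toReal with hg
  have hg_meas : Measurable g := (Measure.measurable_rnDeriv P G).ennreal_toReal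
  have h_pos : ∀ᵐ x ∂P, 0 < P.rnDeriv G x := Measure.rnDeriv_pos hPG
  have h_lt_top : ∀ᵐ x ∂P, P.rnDeriv G x < ⊤ := hPG.ae_le (Measure.rnDeriv_lt_top P G)
  have hgpos : ∀ᵐ x ∂P, 0 < g x := by
    filter_upwards [h_pos, h_lt_top] with x h1 h2
    exact ENNReal.toReal_pos h1.ne' h2.ne
  have hlint : ∫⁻ x, ENNReal.ofReal (g x)⁻¹ ∂P ≤ 1 := by
    conv_lhs => rw [← Measure.withDensity_rnDeriv_eq P G hPG]
    rw [lintegral_withDensity_eq_lintegral_mul _ (Measure.measurable_rnDeriv P G)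
      (show Measurable (fun x => ENNReal.ofReal (g x)⁻¹) from hg_meas.inv.ennreal_ofReal)]
    calc ∫⁻ x, (P.rnDeriv G * fun x => ENNReal.ofReal (g x)⁻¹) x ∂G
        ≤ ∫⁻ _, 1 ∂G := by
          refine lintegral_mono fun x => ?_
          simp only [Pi.mul_apply]
          rcases eq_or_ne (P.rnDeriv G x) 0 with h | h
          · simp [h]
          rcases eq_or_ne (P.rnDeriv G x) ⊤ with h' | h'
          · simp [h', hg]
          · have : ENNReal.ofReal (g x)⁻¹ = (P.rnDeriv G x)⁻¹ := by
              rw [hg, ← ENNReal.ofReal_toReal (ENNReal.inv_ne_top.2 h),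
                ENNReal.toReal_inv]
            rw [this, ENNReal.mul_inv_cancel h h']
      _ = 1 := by simp
  have hinv_int : Integrable (fun x => (g x)⁻¹) P := by
    refine ⟨(hg_meas.inv).aestronglyMeasurable, ?_⟩
    rw [hasFiniteIntegral_iff_ofReal (ae_of_all _ fun x => inv_nonneg.2 ENNReal.toReal_nonneg)]
    exact lt_of_le_of_lt hlint ENNReal.one_lt_top
  have hinv_le : ∫ x, (g x)⁻¹ ∂P ≤ 1 := by
    rw [integral_eq_lintegral_of_nonneg_ae
      (ae_of_all _ fun x => inv_nonneg.2 ENNReal.toReal_nonneg)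
      (hg_meas.inv).aestronglyMeasurable]
    simpa using ENNReal.toReal_mono ENNReal.one_ne_top hlint
  set φ : α → ℝ := fun x => (g x)⁻¹ - 1 + llr P G x with hφ
  have hφ_int : Integrable φ P := (hinv_int.sub (integrable_const 1)).add hint
  have hφ_nonneg : 0 ≤ᵐ[P] φ := by
    filter_upwards [hgpos] with x hx
    have h1 : log (g x)⁻¹ ≤ (g x)⁻¹ - 1 := log_le_sub_one_of_pos (inv_pos.2 hx)
    rw [log_inv] at h1
    simp only [hφ, llr, Pi.zero_apply, ← hg]
    linarith
  have hφ_le : ∫ x, φ x ∂P ≤ 0 := by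
    have e1 : ∫ x, φ x ∂P = (∫ x, ((g x)⁻¹ - 1) ∂P) + ∫ x, llr P G x ∂P :=
      integral_add (hinv_int.sub (integrable_const 1)) hint
    have e2 : ∫ x, ((g x)⁻¹ - 1) ∂P = (∫ x, (g x)⁻¹ ∂P) - ∫ x, (1 : ℝ) ∂P :=
      integral_sub hinv_int (integrable_const 1)
    have e3 : ∫ x, (1 : ℝ) ∂P = 1 := by simp
    rw [e1, e2, e3, h0]
    linarith
  have hφ_zero : φ =ᵐ[P] 0 :=
    (integral_eq_zero_iff_of_nonneg_ae hφ_nonneg hφ_int).1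
      (le_antisymm hφ_le (integral_nonneg_of_ae hφ_nonneg))
  have hg1 : ∀ᵐ x ∂P, P.rnDeriv G x = 1 := by
    filter_upwards [hφ_zero, hgpos] with x hx hpos
    have hx' : (g x)⁻¹ - 1 + log (g x) = 0 := hx
    by_contra hne
    have hgne : g x ≠ 1 := by
      rw [hg]; simp only [Ne, ENNReal.toReal_eq_one_iff]; exact hne
    have hlt : log (g x)⁻¹ < (g x)⁻¹ - 1 :=
      log_lt_sub_one_of_pos (inv_pos.2 hpos) (by simp [inv_eq_one, hgne])
    rw [log_inv] at hlt
    linarith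
  set S : Set α := {x | P.rnDeriv G x = 1} with hS
  have hSm : MeasurableSet S := Measure.measurable_rnDeriv P G (measurableSet_singleton 1)
  have hPS : P S = 1 := by
    rw [← prob_compl_eq_zero_iff hSm]
    rw [ae_iff] at hg1
    simpa [hS, Set.compl_setOf] using hg1
  have hGS : G S = 1 := by
    have h1 : ∫⁻ x in S, P.rnDeriv G x ∂G = P S := Measure.setLIntegral_rnDeriv' hPG hSm
    rw [setLIntegral_congr_fun_ae hSm (ae_of_all _ fun x hx => hx), setLIntegral_one] at h1
    rw [h1, hPS]
  have := (prob_compl_eq_zero_iff hSm).2 hGS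
  rw [ae_iff]
  simpa [hS, Set.compl_setOf] using this

/-- **Equality case of the Gibbs variational principle.** With `P ≪ Q` probability measures,
`β > 0`, `ℓ` measurable with `exp (-β ℓ)` `Q`-integrable, `ℓ` `P`-integrable, finite KL
divergence, and `Z := ∫ exp (-β ℓ) dQ` (which is positive), equality
`-(1/β) log Z - (1/β) D(P‖Q) = ∫ ℓ dP` holds if and only if
`dP/dQ = exp (-β ℓ) / Z` holds `Q`-almost everywhere. -/
theorem gibbs_variational_principle_eq_iff
    {Ω : Type*} [MeasurableSpace Ω]
    (P Q : Measure Ω) [IsProbabilityMeasure P] [IsProbabilityMeasure Q]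
    (hPQ : P ≪ Q)
    (β : ℝ) (hβ : 0 < β)
    (ℓ : Ω → ℝ) (hℓmeas : Measurable ℓ)
    (hexp : Integrable (fun ω => Real.exp (-β * ℓ ω)) Q)
    (hℓP : Integrable ℓ P)
    (hKL : Integrable (fun ω => Real.log ((P.rnDeriv Q ω).toReal)) P)
    (Z : ℝ) (hZ : Z = ∫ ω, Real.exp (-β * ℓ ω) ∂Q) :
    0 < Z ∧
      ((-(1 / β) * Real.log Z
          - (1 / β) * ∫ ω, Real.log ((P.rnDeriv Q ω).toReal) ∂P
            = ∫ ω, ℓ ω ∂P)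
        ↔ (∀ᵐ ω ∂Q, (P.rnDeriv Q ω).toReal = Real.exp (-β * ℓ ω) / Z)) := by
  have hZpos : 0 < Z := hZ ▸ integral_exp_pos hexp
  refine ⟨hZpos, ?_⟩
  set f : Ω → ℝ := fun ω => -β * ℓ ω with hf
  have hfP : Integrable f P := hℓP.const_mul (-β)
  have hKL' : Integrable (llr P Q) P := hKL
  set G : Measure Ω := Q.tilted f with hG
  have : IsProbabilityMeasure G := isProbabilityMeasure_tilted hexp
  have hGQ : G ≪ Q := tilted_absolutelyContinuous Q f
  have hQG : Q ≪ G := absolutelyContinuous_tilted hexp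
  have hPG : P ≪ G := hPQ.trans hQG
  set A : ℝ := ∫ ω, Real.log ((P.rnDeriv Q ω).toReal) ∂P with hA
  set L : ℝ := ∫ ω, ℓ ω ∂P with hL
  have hfint : ∫ ω, f ω ∂P = -β * L := by
    rw [hf, hL, integral_const_mul]
  have e1 : ∫ x, llr P Q x ∂P = A := rfl
  have e2 : (∫ x, Real.exp (f x) ∂Q) = Z := hZ.symm
  have hkey : ∫ x, llr P G x ∂P = A + β * L + log Z := by
    rw [hG, integral_llr_tilted_right hPQ hfP hexp hKL', hfint, e1, e2]
    ring
  constructor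
  · -- forward: equality ⇒ a.e. identity
    intro hEq
    have hA_eq : A = -log Z - β * L := by
      field_simp at hEq
      nlinarith [hEq]
    have h0 : ∫ x, llr P G x ∂P = 0 := by rw [hkey, hA_eq]; ring
    have hint : Integrable (llr P G) P :=
      integrable_llr_tilted_right hPQ hfP hKL' hexp
    have h1 : ∀ᵐ x ∂G, P.rnDeriv G x = 1 := gibbs_aux P G hPG hint h0
    have h1Q : ∀ᵐ x ∂Q, P.rnDeriv G x = 1 := hQG.ae_le h1
    have h2 : P.rnDeriv G * G.rnDeriv Q =ᵐ[Q] P.rnDeriv Q :=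
      Measure.rnDeriv_mul_rnDeriv hPG
    have h3 : G.rnDeriv Q =ᵐ[Q] fun x => ENNReal.ofReal (Real.exp (f x) / Z) := by
      rw [← e2]
      exact rnDeriv_tilted_left_self (hℓmeas.const_mul (-β)).aemeasurable
    filter_upwards [h1Q, h2, h3] with x hx1 hx2 hx3
    rw [← hx2]
    simp only [Pi.mul_apply, hx1, hx3, one_mul]
    rw [ENNReal.toReal_ofReal (div_nonneg (exp_pos _).le hZpos.le)]
  · -- backward: a.e. identity ⇒ equality
    intro h
    have hP : ∀ᵐ ω ∂P, Real.log ((P.rnDeriv Q ω).toReal) = -β * ℓ ω - log Z := by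
      filter_upwards [hPQ.ae_le h] with ω hω
      rw [hω, log_div (exp_ne_zero _) hZpos.ne', log_exp]
    have hA_eq : A = -β * L - log Z := by
      rw [hA, integral_congr_ae hP, integral_sub (hℓP.const_mul (-β)) (integrable_const _),
        integral_const_mul, integral_const, probReal_univ, smul_eq_mul,
        one_mul, hL]
    rw [hA_eq]
    field_simp
    ring
end

section
/- Let (Ξ, 𝒜, Q) be a probability space, U a nonempty compact topological space, S : U × Ξ → ℝ such that for each u ∈ U the map S(u, ·) is measurable, nonnegative, and Q-integrable, and r : U → ℝ nonnegative and continuous. Define F_β(u) := -(1/β)·log(∫ exp(-β·S(u,ξ)) dQ(ξ)) for β > 0, and assume that u ↦ ∫ S(u,ξ) dQ(ξ) is continuous on U and that u ↦ F_β(u) is continuous on U for each β > 0. Then sup_{β > 0} inf_{u ∈ U} (F_β(u) + r(u)) = inf_{u ∈ U} (∫ S(u,ξ) dQ(ξ) + r(u)); that is, the irreducible task cost at zero information budget equals the optimal open-loop task cost: J_irr(0) = J_ol. -/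
open MeasureTheory Real Topology Filter

section Aux

variable {Ξ : Type*} [MeasurableSpace Ξ] (Q : Measure Ξ) [IsProbabilityMeasure Q]
variable {f : Ξ → ℝ}

lemma aux_int_exp (hm : Measurable f) (hnn : ∀ ξ, 0 ≤ f ξ) {β : ℝ} (hβ : 0 ≤ β) :
    Integrable (fun ξ => Real.exp (-β * f ξ)) Q := by
  refine Integrable.mono' (integrable_const 1) ((hm.const_mul (-β)).exp.aestronglyMeasurable)
    (Filter.Eventually.of_forall fun ξ => ?_)
  rw [Real.norm_eq_abs, abs_of_pos (Real.exp_pos _)]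
  calc Real.exp (-β * f ξ) ≤ Real.exp 0 := Real.exp_le_exp.mpr (by nlinarith [hnn ξ])
    _ = 1 := Real.exp_zero

lemma aux_I_pos (hm : Measurable f) (hnn : ∀ ξ, 0 ≤ f ξ) {β : ℝ} (hβ : 0 ≤ β) :
    0 < ∫ ξ, Real.exp (-β * f ξ) ∂Q := by
  have h := integral_pos_iff_support_of_nonneg (μ := Q)
    (f := fun ξ => Real.exp (-β * f ξ)) (fun ξ => (Real.exp_pos _).le)
    (aux_int_exp Q hm hnn hβ)
  refine h.mpr ?_
  have hsupp : (Function.support fun ξ => Real.exp (-β * f ξ)) = Set.univ :=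
    Set.eq_univ_of_forall fun ξ => (Real.exp_pos _).ne'
  rw [hsupp]
  simp

lemma aux_I_le_one (hm : Measurable f) (hnn : ∀ ξ, 0 ≤ f ξ) {β : ℝ} (hβ : 0 ≤ β) :
    ∫ ξ, Real.exp (-β * f ξ) ∂Q ≤ 1 := by
  calc ∫ ξ, Real.exp (-β * f ξ) ∂Q ≤ ∫ _ξ, (1 : ℝ) ∂Q := by
        refine integral_mono (aux_int_exp Q hm hnn hβ) (integrable_const 1) fun ξ => ?_
        calc Real.exp (-β * f ξ) ≤ Real.exp 0 := Real.exp_le_exp.mpr (by nlinarith [hnn ξ])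
          _ = 1 := Real.exp_zero
    _ = 1 := by simp

/-- Jensen: `exp (-β ∫ f) ≤ ∫ exp (-β f)`. -/
lemma aux_jensen (hm : Measurable f) (hnn : ∀ ξ, 0 ≤ f ξ) (hi : Integrable f Q) {β : ℝ}
    (hβ : 0 ≤ β) :
    Real.exp (-β * ∫ ξ, f ξ ∂Q) ≤ ∫ ξ, Real.exp (-β * f ξ) ∂Q := by
  have h := convexOn_exp.map_integral_le (f := fun ξ => -β * f ξ)
    (μ := Q) continuous_exp.continuousOn isClosed_univ
    (Filter.Eventually.of_forall fun ξ => Set.mem_univ _) (hi.const_mul (-β))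
    ((aux_int_exp Q hm hnn hβ))
  rwa [show (∫ x, (fun ξ => -β * f ξ) x ∂Q) = -β * ∫ ξ, f ξ ∂Q from integral_const_mul _ _] at h

/-- The free energy is at most the mean. -/
lemma aux_F_le_mean (hm : Measurable f) (hnn : ∀ ξ, 0 ≤ f ξ) (hi : Integrable f Q) {β : ℝ}
    (hβ : 0 < β) :
    -(1 / β) * Real.log (∫ ξ, Real.exp (-β * f ξ) ∂Q) ≤ ∫ ξ, f ξ ∂Q := by
  have hJ := aux_jensen Q hm hnn hi hβ.le
  have hlog : -β * ∫ ξ, f ξ ∂Q ≤ Real.log (∫ ξ, Real.exp (-β * f ξ) ∂Q) := by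
    have := (Real.log_le_log_iff (Real.exp_pos _) (aux_I_pos Q hm hnn hβ.le)).mpr hJ
    rwa [Real.log_exp] at this
  have h2 := mul_le_mul_of_nonneg_left hlog (le_of_lt (one_div_pos.mpr hβ))
  have heq : (1 / β) * (-β * ∫ ξ, f ξ ∂Q) = -(∫ ξ, f ξ ∂Q) := by
    field_simp
  rw [heq] at h2
  linarith

/-- Nonnegativity of the free energy. -/
lemma aux_F_nonneg (hm : Measurable f) (hnn : ∀ ξ, 0 ≤ f ξ) {β : ℝ} (hβ : 0 < β) :
    0 ≤ -(1 / β) * Real.log (∫ ξ, Real.exp (-β * f ξ) ∂Q) := by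
  have hle : Real.log (∫ ξ, Real.exp (-β * f ξ) ∂Q) ≤ 0 :=
    Real.log_nonpos (aux_I_pos Q hm hnn hβ.le).le (aux_I_le_one Q hm hnn hβ.le)
  have : 0 ≤ 1 / β := (one_div_pos.mpr hβ).le
  nlinarith

/-- Antitonicity of the free energy in `β`. -/
lemma aux_F_antitone (hm : Measurable f) (hnn : ∀ ξ, 0 ≤ f ξ) {a b : ℝ}
    (ha : 0 < a) (hab : a ≤ b) :
    -(1 / b) * Real.log (∫ ξ, Real.exp (-b * f ξ) ∂Q) ≤
      -(1 / a) * Real.log (∫ ξ, Real.exp (-a * f ξ) ∂Q) := by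
  have hb : 0 < b := ha.trans_le hab
  set Ia := ∫ ξ, Real.exp (-a * f ξ) ∂Q with hIa
  set Ib := ∫ ξ, Real.exp (-b * f ξ) ∂Q with hIb
  have hIapos : 0 < Ia := aux_I_pos Q hm hnn ha.le
  have hIbpos : 0 < Ib := aux_I_pos Q hm hnn hb.le
  have hp0 : (0:ℝ) ≤ a / b := div_nonneg ha.le hb.le
  have hp1 : a / b ≤ 1 := (div_le_one hb).mpr hab
  have hcomp : ∀ ξ, Real.exp (-b * f ξ) ^ (a / b) = Real.exp (-a * f ξ) := by
    intro ξ
    rw [← Real.exp_mul]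
    congr 1
    field_simp
  have hkey : Ia ≤ Ib ^ (a / b) := by
    have h := (Real.concaveOn_rpow hp0 hp1).le_map_integral (μ := Q)
      (f := fun ξ => Real.exp (-b * f ξ))
      ((continuousOn_id).rpow_const (fun x _ => Or.inr hp0)) isClosed_Ici
      (Filter.Eventually.of_forall fun ξ => (Real.exp_pos _).le)
      (aux_int_exp Q hm hnn hb.le)
      (by
        have : ((fun x : ℝ => x ^ (a/b)) ∘ fun ξ => Real.exp (-b * f ξ))
            = fun ξ => Real.exp (-a * f ξ) := funext fun ξ => hcomp ξ
        rw [this]; exact aux_int_exp Q hm hnn ha.le)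
    calc Ia = ∫ ξ, Real.exp (-b * f ξ) ^ (a / b) ∂Q := by
          simp only [hcomp]
          exact hIa
      _ ≤ (∫ ξ, Real.exp (-b * f ξ) ∂Q) ^ (a / b) := h
  have hlog : Real.log Ia ≤ (a / b) * Real.log Ib := by
    have := (Real.log_le_log_iff hIapos (Real.rpow_pos_of_pos hIbpos _)).mpr hkey
    rwa [Real.log_rpow hIbpos] at this
  have h2 := mul_le_mul_of_nonneg_left hlog (le_of_lt (one_div_pos.mpr ha))
  have heq : (1 / a) * ((a / b) * Real.log Ib) = (1 / b) * Real.log Ib := by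
    field_simp
  rw [heq] at h2
  linarith

/-- Pointwise bound `exp (-x) ≤ 1 - x + x * min x 1` for `x ≥ 0`. -/
lemma aux_exp_bound {x : ℝ} (hx : 0 ≤ x) : Real.exp (-x) ≤ 1 - x + x * min x 1 := by
  rcases le_total x 1 with h | h
  · rw [min_eq_left h]
    have key : Real.exp (-x) * Real.exp x = 1 := by
      rw [← Real.exp_add]; simp
    have h1 : x + 1 ≤ Real.exp x := Real.add_one_le_exp x
    nlinarith [Real.exp_pos (-x), mul_le_mul_of_nonneg_left h1 (Real.exp_pos (-x)).le,
      pow_nonneg hx 3]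
  · rw [min_eq_right h]
    have : Real.exp (-x) ≤ Real.exp 0 := Real.exp_le_exp.mpr (by linarith)
    rw [Real.exp_zero] at this
    nlinarith

lemma aux_E_integrable (hm : Measurable f) (hnn : ∀ ξ, 0 ≤ f ξ) (hi : Integrable f Q)
    {β : ℝ} (hβ : 0 ≤ β) :
    Integrable (fun ξ => f ξ * min (β * f ξ) 1) Q := by
  refine Integrable.mono' hi ((hm.mul ((hm.const_mul β).min measurable_const)).aestronglyMeasurable)
    (Filter.Eventually.of_forall fun ξ => ?_)
  rw [Real.norm_eq_abs]
  have hminnn : 0 ≤ min (β * f ξ) 1 := le_min (mul_nonneg hβ (hnn ξ)) zero_le_one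
  rw [abs_of_nonneg (mul_nonneg (hnn ξ) hminnn)]
  calc f ξ * min (β * f ξ) 1 ≤ f ξ * 1 :=
        mul_le_mul_of_nonneg_left (min_le_right _ _) (hnn ξ)
    _ = f ξ := mul_one _

/-- Lower bound: `mean - E β ≤ F β` where `E β = ∫ f * min (β f) 1`. -/
lemma aux_F_lower (hm : Measurable f) (hnn : ∀ ξ, 0 ≤ f ξ) (hi : Integrable f Q) {β : ℝ}
    (hβ : 0 < β) :
    (∫ ξ, f ξ ∂Q) - (∫ ξ, f ξ * min (β * f ξ) 1 ∂Q) ≤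
      -(1 / β) * Real.log (∫ ξ, Real.exp (-β * f ξ) ∂Q) := by
  set m := ∫ ξ, f ξ ∂Q
  set E := ∫ ξ, f ξ * min (β * f ξ) 1 ∂Q
  set I := ∫ ξ, Real.exp (-β * f ξ) ∂Q with hI
  have hIpos : 0 < I := aux_I_pos Q hm hnn hβ.le
  have hEint := aux_E_integrable Q hm hnn hi hβ.le
  have hint1 : Integrable (fun ξ => 1 - β * f ξ) Q := (integrable_const 1).sub (hi.const_mul β)
  have hint2 : Integrable (fun ξ => β * (f ξ * min (β * f ξ) 1)) Q := hEint.const_mul β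
  have hbound : I ≤ 1 - β * m + β * E := by
    have hmono : I ≤ ∫ ξ, (1 - β * f ξ + β * (f ξ * min (β * f ξ) 1)) ∂Q := by
      refine integral_mono (aux_int_exp Q hm hnn hβ.le) (hint1.add hint2) fun ξ => ?_
      have hx : 0 ≤ β * f ξ := mul_nonneg hβ.le (hnn ξ)
      have h := aux_exp_bound hx
      have hmin : β * (f ξ * min (β * f ξ) 1) = (β * f ξ) * min (β * f ξ) 1 := by ring
      calc Real.exp (-β * f ξ) = Real.exp (-(β * f ξ)) := by ring_nf
        _ ≤ 1 - β * f ξ + (β * f ξ) * min (β * f ξ) 1 := h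
        _ = 1 - β * f ξ + β * (f ξ * min (β * f ξ) 1) := by ring
    calc I ≤ ∫ ξ, (1 - β * f ξ + β * (f ξ * min (β * f ξ) 1)) ∂Q := hmono
      _ = 1 - β * m + β * E := by
          rw [integral_add hint1 hint2, integral_sub (integrable_const 1) (hi.const_mul β),
            integral_const_mul, integral_const_mul, integral_const]
          simp
          rfl
  have hlog : Real.log I ≤ β * E - β * m :=
    (Real.log_le_sub_one_of_pos hIpos).trans (by linarith)
  have h2 := mul_le_mul_of_nonneg_left hlog (le_of_lt (one_div_pos.mpr hβ))
  have heq : (1 / β) * (β * E - β * m) = E - m := by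
    field_simp
  rw [heq] at h2
  linarith

/-- The error term tends to `0` along `β = 1/(n+1)`. -/
lemma aux_E_tendsto (hm : Measurable f) (hnn : ∀ ξ, 0 ≤ f ξ) (hi : Integrable f Q) :
    Filter.Tendsto (fun n : ℕ => ∫ ξ, f ξ * min ((1 / (n + 1 : ℝ)) * f ξ) 1 ∂Q)
      Filter.atTop (𝓝 0) := by
  have h0 : (0 : ℝ) = ∫ _ξ, (0 : ℝ) ∂Q := by simp
  rw [h0]
  refine tendsto_integral_of_dominated_convergence f
    (fun n => ((hm.mul ((hm.const_mul _).min measurable_const)).aestronglyMeasurable)) hi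
    (fun n => Filter.Eventually.of_forall fun ξ => ?_)
    (Filter.Eventually.of_forall fun ξ => ?_)
  · rw [Real.norm_eq_abs]
    have hb : 0 < (1 / (n + 1 : ℝ)) := by positivity
    have hminnn : 0 ≤ min ((1 / (n + 1 : ℝ)) * f ξ) 1 :=
      le_min (mul_nonneg hb.le (hnn ξ)) zero_le_one
    rw [abs_of_nonneg (mul_nonneg (hnn ξ) hminnn)]
    calc f ξ * min ((1 / (n + 1 : ℝ)) * f ξ) 1 ≤ f ξ * 1 :=
          mul_le_mul_of_nonneg_left (min_le_right _ _) (hnn ξ)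
      _ = f ξ := mul_one _
  · have h1 : Filter.Tendsto (fun n : ℕ => (1 / (n + 1 : ℝ)) * f ξ) Filter.atTop (𝓝 0) := by
      have := tendsto_one_div_add_atTop_nhds_zero_nat.mul_const (f ξ)
      simpa using this
    have h2 : Filter.Tendsto (fun n : ℕ => min ((1 / (n + 1 : ℝ)) * f ξ) 1)
        Filter.atTop (𝓝 0) := by
      have := h1.min (tendsto_const_nhds (x := (1:ℝ)))
      simpa [min_eq_left (zero_le_one (α := ℝ))] using this
    have := h2.const_mul (f ξ)
    simpa using this

end Aux

/-- **Zero-information budget recovers the open-loop cost.** On a probability space `(Ξ, Q)`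
with a nonempty compact control space `U`, state cost `S` (measurable, nonnegative,
integrable in `ξ` for each `u`) and a nonnegative continuous control cost `r`, if the mean
cost `u ↦ ∫ S(u, ξ) dQ` and each free energy `u ↦ F_β(u)` are continuous, then
`sup_{β > 0} inf_u (F_β(u) + r u) = inf_u (∫ S(u, ξ) dQ + r u)`, i.e. `J_irr(0) = J_ol`. -/
theorem Jirr_zero_eq_Jol
    {Ξ U : Type*} [MeasurableSpace Ξ]
    [TopologicalSpace U] [CompactSpace U] [Nonempty U]
    (Q : Measure Ξ) [IsProbabilityMeasure Q]
    (S : U → Ξ → ℝ) (r : U → ℝ)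
    (hSmeas : ∀ u, Measurable (S u))
    (hSnn : ∀ u ξ, 0 ≤ S u ξ)
    (hSint : ∀ u, Integrable (S u) Q)
    (hrnn : ∀ u, 0 ≤ r u) (hrcont : Continuous r)
    (hmean_cont : Continuous (fun u => ∫ ξ, S u ξ ∂Q))
    (hF_cont : ∀ β : ℝ, 0 < β →
      Continuous (fun u => -(1 / β) * Real.log (∫ ξ, Real.exp (-β * S u ξ) ∂Q))) :
    (⨆ β : {b : ℝ // 0 < b},
        ⨅ u : U, (-(1 / β.1) * Real.log (∫ ξ, Real.exp (-β.1 * S u ξ) ∂Q) + r u))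
      = ⨅ u : U, (∫ ξ, S u ξ ∂Q + r u) := by
  classical
  haveI : Nonempty {b : ℝ // 0 < b} := ⟨⟨1, one_pos⟩⟩
  have hmnn : ∀ u : U, 0 ≤ ∫ ξ, S u ξ ∂Q := fun u => integral_nonneg (hSnn u)
  have hbddg : ∀ β : ℝ, 0 < β → BddBelow (Set.range fun u : U =>
      -(1 / β) * Real.log (∫ ξ, Real.exp (-β * S u ξ) ∂Q) + r u) := fun β hβ =>
    ⟨0, by rintro x ⟨u, rfl⟩
           exact add_nonneg (aux_F_nonneg Q (hSmeas u) (hSnn u) hβ) (hrnn u)⟩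
  have hbddh : BddBelow (Set.range fun u : U => (∫ ξ, S u ξ ∂Q) + r u) :=
    ⟨0, by rintro x ⟨u, rfl⟩; exact add_nonneg (hmnn u) (hrnn u)⟩
  have hinf_le : ∀ β : {b : ℝ // 0 < b},
      (⨅ u : U, (-(1 / β.1) * Real.log (∫ ξ, Real.exp (-β.1 * S u ξ) ∂Q) + r u))
        ≤ ⨅ u : U, ((∫ ξ, S u ξ ∂Q) + r u) := fun β =>
    ciInf_mono (hbddg β.1 β.2) fun u =>
      add_le_add (aux_F_le_mean Q (hSmeas u) (hSnn u) (hSint u) β.2) le_rfl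
  have hbddsup : BddAbove (Set.range fun β : {b : ℝ // 0 < b} =>
      ⨅ u : U, (-(1 / β.1) * Real.log (∫ ξ, Real.exp (-β.1 * S u ξ) ∂Q) + r u)) :=
    ⟨⨅ u : U, ((∫ ξ, S u ξ ∂Q) + r u), by rintro x ⟨β, rfl⟩; exact hinf_le β⟩
  refine le_antisymm (ciSup_le hinf_le) (le_of_forall_pos_le_add fun ε hε => ?_)
  have hchoice : ∀ u : U, ∃ β : ℝ, 0 < β ∧
      (∫ ξ, S u ξ ∂Q) - (-(1 / β) * Real.log (∫ ξ, Real.exp (-β * S u ξ) ∂Q)) < ε := by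
    intro u
    obtain ⟨n, hn⟩ :=
      ((aux_E_tendsto Q (hSmeas u) (hSnn u) (hSint u)).eventually_lt_const hε).exists
    have hβp : (0:ℝ) < 1 / (n + 1 : ℝ) := by positivity
    have hlow := aux_F_lower Q (hSmeas u) (hSnn u) (hSint u) hβp
    exact ⟨1 / (n + 1 : ℝ), hβp, by linarith⟩
  choose bta hbpos hblt using hchoice
  have hVopen : ∀ u : U, IsOpen {v : U |
      (∫ ξ, S v ξ ∂Q) - (-(1 / bta u) * Real.log (∫ ξ, Real.exp (-(bta u) * S v ξ) ∂Q)) < ε} :=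
    fun u => isOpen_lt (hmean_cont.sub (hF_cont (bta u) (hbpos u))) continuous_const
  obtain ⟨t, ht⟩ := isCompact_univ.elim_finite_subcover _ hVopen
    (fun v _ => Set.mem_iUnion.mpr ⟨v, hblt v⟩)
  have htne : t.Nonempty := by
    obtain ⟨u, hu, -⟩ := Set.mem_iUnion₂.mp (ht (Set.mem_univ (Classical.arbitrary U)))
    exact ⟨u, hu⟩
  have hβs_pos : (0:ℝ) < t.inf' htne bta :=
    (Finset.lt_inf'_iff _).mpr fun u _ => hbpos u
  have hkey : ∀ v : U, (⨅ u : U, ((∫ ξ, S u ξ ∂Q) + r u)) - ε ≤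
      -(1 / t.inf' htne bta) *
        Real.log (∫ ξ, Real.exp (-(t.inf' htne bta) * S v ξ) ∂Q) + r v := by
    intro v
    obtain ⟨u, hut, hv⟩ := Set.mem_iUnion₂.mp (ht (Set.mem_univ v))
    simp only [Set.mem_setOf_eq] at hv
    have hble : t.inf' htne bta ≤ bta u := Finset.inf'_le bta hut
    have h2 := aux_F_antitone Q (hSmeas v) (hSnn v) hβs_pos hble
    have hM := ciInf_le hbddh v
    linarith
  calc (⨅ u : U, ((∫ ξ, S u ξ ∂Q) + r u))
      ≤ (⨅ u : U, (-(1 / t.inf' htne bta) *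
          Real.log (∫ ξ, Real.exp (-(t.inf' htne bta) * S u ξ) ∂Q) + r u)) + ε := by
        have := le_ciInf hkey
        linarith
    _ ≤ _ + ε := add_le_add (le_ciSup hbddsup ⟨t.inf' htne bta, hβs_pos⟩) le_rfl
end
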